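/- Let p, q be primes with q dividing p−1, let G = Z/pZ ⋊ Z/q^nZ be a semidirect product where Z/q^nZ acts faithfully on A = Z/pZ, in particular q^n divides p−1. If S is a gapless sequence over the character group of A that is not divisible by any brick and whose support lies in a single G/A-orbit O of size q^n, then |S| ≤ 1 + 2 + ... + (q^n − q^{n−1}) = C(q^n − q^{n−1} + 1, 2). -/

import Mathlib

private lemma sum_range_sub_choose (m : ℕ) :
    ∑ i ∈ Finset.range m, (m - i) = (m + 1).choose 2 := by
  induction m with
  | zero => simp
  | succ m ih =>
    rw [Finset.sum_range_succ']
    have e : ∀ i : ℕ, m + 1 - (i + 1) = m - i := fun i => by omega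
    simp only [e, Nat.sub_zero]
    rw [ih]
    have h2 : (m + 1 + 1).choose 2 = (m + 1).choose 1 + (m + 1).choose 2 :=
      Nat.choose_succ_succ (m + 1) 1
    rw [Nat.choose_one_right] at h2
    omega

private lemma chain_le (m : ℕ) (c : ℕ → ℕ) (h0 : c 0 ≤ m)
    (hstep : ∀ i, 0 < c (i + 1) → c (i + 1) < c i) : ∀ i, c i ≤ m - i := by
  intro i
  induction i with
  | zero => simpa using h0
  | succ i ih =>
    rcases Nat.eq_zero_or_pos (c (i + 1)) with h | h
    · omega
    · have := hstep i h
      omega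

/-- Let `p, q` be primes and let `u` be a unit of `ℤ/pℤ` of order `q^n` (so
`ℤ/q^nℤ` acts faithfully on `ℤ/pℤ` by multiplication by powers of `u`). Let `O`
be the orbit of a nonzero element `x₀` (of size `q^n`). If a sequence `S` over
`ℤ/pℤ` is supported in `O`, is not divisible by any brick (the orbit of an
element under the minimal nontrivial subgroup, generated by `u^(q^(n-1))`), and
is gapless (in terms of its row decomposition `R_i = {z ∈ O : count z ≥ i}`),
then `|S| ≤ 1 + 2 + ⋯ + (q^n − q^(n−1)) = C(q^n − q^(n−1) + 1, 2)`. -/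
theorem stmt16 (p q n : ℕ) (hp : p.Prime) (hq : q.Prime) (hn : 0 < n)
    (u : (ZMod p)ˣ) (hu : orderOf u = q ^ n)
    (x0 : ZMod p) (hx0 : x0 ≠ 0)
    (O : Finset (ZMod p))
    (hO : O = Finset.image (fun j => ((u : ZMod p) ^ j) * x0) (Finset.range (q ^ n)))
    (S : Multiset (ZMod p))
    (hsupp : S.toFinset ⊆ O)
    (hbrick : ∀ y : ZMod p, y ≠ 0 →
      ¬ (Multiset.map (fun j => ((u : ZMod p) ^ (q ^ (n - 1))) ^ j * y)
          (Multiset.range q) ≤ S))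
    (hgap : ∀ i : ℕ,
      (O.filter (fun z => i + 1 ≤ S.count z)).Nonempty →
      (O.filter (fun z => i + 1 ≤ S.count z) ≠ O.filter (fun z => i + 2 ≤ S.count z) ∨
       O.filter (fun z => i + 1 ≤ S.count z) = O)) :
    Multiset.card S ≤ Nat.choose (q ^ n - q ^ (n - 1) + 1) 2 := by
  classical
  haveI := Fact.mk hp
  set N := q ^ (n - 1) with hNdef
  have hNpos : 0 < N := pow_pos hq.pos _
  have hqn : q ^ n = N * q := by
    rw [hNdef, ← pow_succ]
    congr 1
    omega
  set f : ℕ → ZMod p := fun j => (u : ZMod p) ^ j * x0 with hfdef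
  -- injectivity of f on [0, q^n)
  have hfinj : ∀ a, a < q ^ n → ∀ b, b < q ^ n → f a = f b → a = b := by
    intro a ha b hb hab
    have h1 : (u : ZMod p) ^ a = (u : ZMod p) ^ b := mul_right_cancel₀ hx0 hab
    have h2 : u ^ a = u ^ b := Units.ext (by
      rw [Units.val_pow_eq_pow_val, Units.val_pow_eq_pow_val]; exact h1)
    have h3 := pow_eq_pow_iff_modEq.mp h2
    rw [hu, Nat.ModEq, Nat.mod_eq_of_lt ha, Nat.mod_eq_of_lt hb] at h3
    exact h3
  have hmemO : ∀ j, j < q ^ n → f j ∈ O := by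
    intro j hj
    rw [hO]
    exact Finset.mem_image.mpr ⟨j, Finset.mem_range.mpr hj, rfl⟩
  have hlt' : ∀ r, r < N → ∀ k, k < q → r + k * N < q ^ n := by
    intro r hr k hk
    have h2 : k * N + N ≤ q * N := by
      have h3 : (k + 1) * N ≤ q * N := Nat.mul_le_mul_right N hk
      calc k * N + N = (k + 1) * N := by ring
        _ ≤ q * N := h3
    rw [hqn, mul_comm N q]
    linarith
  -- brick-freeness, reformulated
  have hbrick' : ∀ r, r < N → ¬ (∀ k, k < q → 1 ≤ S.count (f (r + k * N))) := by
    intro r hr hall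
    have hfr0 : f r ≠ 0 := mul_ne_zero (pow_ne_zero _ (Units.ne_zero u)) hx0
    refine hbrick (f r) hfr0 ?_
    have hfun : (fun j => ((u : ZMod p) ^ N) ^ j * f r) = fun j => f (r + j * N) := by
      funext j
      show ((u : ZMod p) ^ N) ^ j * ((u : ZMod p) ^ r * x0)
          = (u : ZMod p) ^ (r + j * N) * x0
      rw [← pow_mul, ← mul_assoc, ← pow_add]
      congr 2
      ring
    rw [Multiset.le_iff_count]
    intro z
    by_cases hz : z ∈ Multiset.map (fun j => ((u : ZMod p) ^ N) ^ j * f r) (Multiset.range q)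
    · have hnod : (Multiset.map (fun j => ((u : ZMod p) ^ N) ^ j * f r)
          (Multiset.range q)).Nodup := by
        rw [hfun]
        refine Multiset.Nodup.map_on ?_ (Multiset.nodup_range q)
        intro a ha b hb hab
        have ha' := Multiset.mem_range.mp ha
        have hb' := Multiset.mem_range.mp hb
        have h4 := hfinj _ (hlt' r hr a ha') _ (hlt' r hr b hb') hab
        have h5 : a * N = b * N := by omega
        exact Nat.eq_of_mul_eq_mul_right hNpos h5
      have hc1 := Multiset.nodup_iff_count_le_one.mp hnod z
      rw [hfun] at hz
      obtain ⟨j, hj, rfl⟩ := Multiset.mem_map.mp hz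
      have h6 := hall j (Multiset.mem_range.mp hj)
      omega
    · rw [Multiset.count_eq_zero_of_notMem hz]
      exact Nat.zero_le _
  -- no row equals O
  have hRO : ∀ i : ℕ, O.filter (fun z => i + 1 ≤ S.count z) ≠ O := by
    intro i hEq
    refine hbrick' 0 hNpos ?_
    intro k hk
    have h1 : f (0 + k * N) ∈ O := hmemO _ (hlt' 0 hNpos k hk)
    have h2 : f (0 + k * N) ∈ O.filter (fun z => i + 1 ≤ S.count z) := hEq.symm ▸ h1
    have h3 := Finset.mem_filter.mp h2
    omega
  -- rows strictly decrease while nonempty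
  have hstep : ∀ i : ℕ,
      0 < (O.filter (fun z => i + 1 + 1 ≤ S.count z)).card →
      (O.filter (fun z => i + 1 + 1 ≤ S.count z)).card
        < (O.filter (fun z => i + 1 ≤ S.count z)).card := by
    intro i hpos
    have hsub : O.filter (fun z => i + 1 + 1 ≤ S.count z)
        ⊆ O.filter (fun z => i + 1 ≤ S.count z) := by
      intro z hz
      have h1 := Finset.mem_filter.mp hz
      exact Finset.mem_filter.mpr ⟨h1.1, by omega⟩
    have hne1 : (O.filter (fun z => i + 1 + 1 ≤ S.count z)).Nonempty :=
      Finset.card_pos.mp hpos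
    have hne : (O.filter (fun z => i + 1 ≤ S.count z)).Nonempty :=
      hne1.mono hsub
    have hd := (hgap i hne).resolve_right (hRO i)
    have hd' : O.filter (fun z => i + 1 + 1 ≤ S.count z)
        ≠ O.filter (fun z => i + 1 ≤ S.count z) := by
      intro h; exact hd h.symm
    exact Finset.card_lt_card (ssubset_of_subset_of_ne hsub hd')
  -- the first row has at most N * (q - 1) elements
  set φ : ZMod p → ℕ := fun z =>
    if h : ∃ j, j < q ^ n ∧ f j = z then h.choose % N else 0 with hφdef
  have hφlt : ∀ z, φ z < N := by
    intro z
    simp only [hφdef]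
    split
    · exact Nat.mod_lt _ hNpos
    · exact hNpos
  have hcard0 : (O.filter (fun z => 0 + 1 ≤ S.count z)).card ≤ N * (q - 1) := by
    have hmaps : ∀ z ∈ O.filter (fun z => 0 + 1 ≤ S.count z), φ z ∈ Finset.range N :=
      fun z _ => Finset.mem_range.mpr (hφlt z)
    rw [Finset.card_eq_sum_card_fiberwise hmaps]
    have key : ∀ r ∈ Finset.range N,
        ((O.filter (fun z => 0 + 1 ≤ S.count z)).filter (fun z => φ z = r)).card
          ≤ q - 1 := by
      intro r hr
      have hrN := Finset.mem_range.mp hr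
      set F : Finset (ZMod p) :=
        Finset.image (fun k => f (r + k * N)) (Finset.range q) with hFdef
      have hFcard : F.card = q := by
        rw [hFdef, Finset.card_image_of_injOn, Finset.card_range]
        intro a ha b hb hab
        have ha' := Finset.mem_range.mp (Finset.mem_coe.mp ha)
        have hb' := Finset.mem_range.mp (Finset.mem_coe.mp hb)
        have h4 := hfinj _ (hlt' r hrN a ha') _ (hlt' r hrN b hb') hab
        have h5 : a * N = b * N := by omega
        exact Nat.eq_of_mul_eq_mul_right hNpos h5
      have hsubF : (O.filter (fun z => 0 + 1 ≤ S.count z)).filter (fun z => φ z = r)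
          ⊆ F := by
        intro z hz
        have h1 := Finset.mem_filter.mp hz
        have h2 := Finset.mem_filter.mp h1.1
        have hex : ∃ j, j < q ^ n ∧ f j = z := by
          rw [hO] at h2
          obtain ⟨j, hj, hjz⟩ := Finset.mem_image.mp h2.1
          exact ⟨j, Finset.mem_range.mp hj, hjz⟩
        have hφz : hex.choose % N = r := by
          have := h1.2
          rw [hφdef] at this
          simpa [dif_pos hex] using this
        obtain ⟨hj1, hj2⟩ := hex.choose_spec
        set j0 := hex.choose with hj0
        have hdm := Nat.div_add_mod j0 N
        have hjeq : r + (j0 / N) * N = j0 := by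
          rw [mul_comm]
          omega
        have hdiv : j0 / N < q := by
          rw [Nat.div_lt_iff_lt_mul hNpos, mul_comm]
          rw [hqn] at hj1
          exact hj1
        rw [hFdef]
        exact Finset.mem_image.mpr ⟨j0 / N, Finset.mem_range.mpr hdiv, by rw [hjeq]; exact hj2⟩
      have hneq : ((O.filter (fun z => 0 + 1 ≤ S.count z)).filter (fun z => φ z = r)).card
          ≠ q := by
        intro hcq
        have heq : (O.filter (fun z => 0 + 1 ≤ S.count z)).filter (fun z => φ z = r) = F :=
          Finset.eq_of_subset_of_card_le hsubF (by rw [hFcard, hcq])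
        refine hbrick' r hrN ?_
        intro k hk
        have hmemF : f (r + k * N) ∈ F := by
          rw [hFdef]
          exact Finset.mem_image.mpr ⟨k, Finset.mem_range.mpr hk, rfl⟩
        rw [← heq] at hmemF
        have h1 := Finset.mem_filter.mp hmemF
        have h2 := Finset.mem_filter.mp h1.1
        omega
      have hle : ((O.filter (fun z => 0 + 1 ≤ S.count z)).filter (fun z => φ z = r)).card
          ≤ q := by
        calc _ ≤ F.card := Finset.card_le_card hsubF
          _ = q := hFcard
      omega
    calc ∑ r ∈ Finset.range N,
          ((O.filter (fun z => 0 + 1 ≤ S.count z)).filter (fun z => φ z = r)).card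
        ≤ ∑ _r ∈ Finset.range N, (q - 1) := Finset.sum_le_sum key
      _ = N * (q - 1) := by rw [Finset.sum_const, Finset.card_range, smul_eq_mul]
  -- chain bound
  set m := N * (q - 1) with hmdef
  have hc : ∀ i, (O.filter (fun z => i + 1 ≤ S.count z)).card ≤ m - i :=
    chain_le m (fun i => (O.filter (fun z => i + 1 ≤ S.count z)).card) hcard0 hstep
  -- counts are at most m
  have hcount_le : ∀ z, S.count z ≤ m := by
    intro z
    by_cases hz : z ∈ O
    · by_contra h
      have h1 : z ∈ O.filter (fun z => m + 1 ≤ S.count z) :=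
        Finset.mem_filter.mpr ⟨hz, by omega⟩
      have h2 := hc m
      have h3 : (O.filter (fun z => m + 1 ≤ S.count z)).card = 0 := by omega
      rw [Finset.card_eq_zero] at h3
      rw [h3] at h1
      exact absurd h1 (Finset.notMem_empty z)
    · have : z ∉ S.toFinset := fun h => hz (hsupp h)
      rw [Multiset.count_eq_zero_of_notMem (fun h => this (Multiset.mem_toFinset.mpr h))]
      exact Nat.zero_le _
  -- total count
  have h1 : Multiset.card S = ∑ z ∈ O, S.count z := by
    rw [← Multiset.toFinset_sum_count_eq S]
    refine Finset.sum_subset hsupp ?_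
    intro z _ hz
    exact Multiset.count_eq_zero_of_notMem (fun h => hz (Multiset.mem_toFinset.mpr h))
  have h2 : ∀ z ∈ O, S.count z
      = ∑ i ∈ Finset.range m, (if i + 1 ≤ S.count z then 1 else 0) := by
    intro z _
    have hb := Finset.sum_boole (R := ℕ) (fun i => i + 1 ≤ S.count z) (Finset.range m)
    rw [hb]
    have hfil : (Finset.range m).filter (fun i => i + 1 ≤ S.count z)
        = Finset.range (S.count z) := by
      ext i
      simp only [Finset.mem_filter, Finset.mem_range]
      have := hcount_le z
      omega
    rw [hfil, Finset.card_range]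
    simp
  have h3 : Multiset.card S
      = ∑ i ∈ Finset.range m, (O.filter (fun z => i + 1 ≤ S.count z)).card := by
    rw [h1, Finset.sum_congr rfl h2, Finset.sum_comm]
    refine Finset.sum_congr rfl ?_
    intro i _
    have hb := Finset.sum_boole (R := ℕ) (fun z => i + 1 ≤ S.count z) O
    rw [hb]
    simp
  have hgoal : q ^ n - q ^ (n - 1) = m := by
    rw [hmdef, hqn, ← hNdef, Nat.mul_sub, mul_one]
  rw [hgoal, h3]
  calc ∑ i ∈ Finset.range m, (O.filter (fun z => i + 1 ≤ S.count z)).card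
      ≤ ∑ i ∈ Finset.range m, (m - i) := Finset.sum_le_sum (fun i _ => hc i)
    _ = (m + 1).choose 2 := sum_range_sub_choose m
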